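/- (Theorem 3.1, left eigenvalue part) Let (H,J,K) and (H̃,J̃,K̃) be two triples of 4×4 real matrices, each satisfying the Hamiltonian conditions (H² = J² = K² = HJK = −E and H̃² = J̃² = K̃² = H̃J̃K̃ = −E), with associated maps Q, P and Q̃, P̃ respectively. Let A, B ∈ ℍ^{m×m} satisfy P(A) = P̃(B), and let λ, γ ∈ ℍ satisfy Q(λ) = Q̃(γ). If λ is a left eigenvalue of A, then γ is a left eigenvalue of B. -/

import Mathlib

open Matrix

/-- The real `4×4` matrix representation of a quaternion determined by matrices
`H, J, K` (assumed to satisfy the Hamiltonian conditions). -/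
noncomputable def qRep (H J K : Matrix (Fin 4) (Fin 4) ℝ) (q : Quaternion ℝ) :
    Matrix (Fin 4) (Fin 4) ℝ :=
  q.re • (1 : Matrix (Fin 4) (Fin 4) ℝ) + q.imI • H + q.imJ • J + q.imK • K

/-- The block real matrix representation of a quaternion matrix: the `(s,t)` block
of `pRep H J K A` is `qRep H J K (A s t)`. -/
noncomputable def pRep (H J K : Matrix (Fin 4) (Fin 4) ℝ) {m n : ℕ}
    (A : Matrix (Fin m) (Fin n) (Quaternion ℝ)) :
    Matrix (Fin m × Fin 4) (Fin n × Fin 4) ℝ :=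
  Matrix.of fun p q => qRep H J K (A p.1 q.1) p.2 q.2

/-- `λ` is a left eigenvalue of `A` if `A v = λ v` for some nonzero `v`. -/
def IsLeftEigenvalue {m : ℕ} (A : Matrix (Fin m) (Fin m) (Quaternion ℝ))
    (l : Quaternion ℝ) : Prop :=
  ∃ v : Fin m → Quaternion ℝ, v ≠ 0 ∧ A.mulVec v = l • v

/-- `λ` is a right eigenvalue of `A` if `A v = v λ` for some nonzero `v`. -/
def IsRightEigenvalue {m : ℕ} (A : Matrix (Fin m) (Fin m) (Quaternion ℝ))
    (l : Quaternion ℝ) : Prop :=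
  ∃ v : Fin m → Quaternion ℝ, v ≠ 0 ∧ A.mulVec v = fun s => v s * l

section helper
variable (H J K : Matrix (Fin 4) (Fin 4) ℝ)
  (hH : H * H = -1) (hJ : J * J = -1) (hK : K * K = -1) (hHJK : H * J * K = -1)

include hH hJ hK hHJK

lemma rel_HJ : H * J = K := by
  have h1 : (H * J) * (K * K) = -1 * K := by rw [← mul_assoc, hHJK]
  rw [hK] at h1
  simpa using h1

lemma rel_JK : J * K = H := by
  have h1 : (H * H) * (J * K) = H * -1 := by
    rw [← hHJK]; noncomm_ring
  rw [hH] at h1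
  simpa using h1

lemma rel_KH : K * H = J := by
  have hjk := rel_JK H J K hH hJ hK hHJK
  have h1 : J * (K * H) = -1 := by rw [← mul_assoc, hjk, hH]
  have h2 : (J * J) * (K * H) = J * (-1) := by rw [mul_assoc, h1]
  rw [hJ] at h2
  simpa [neg_inj] using h2

lemma rel_JH : J * H = -K := by
  have hkh := rel_KH H J K hH hJ hK hHJK
  calc J * H = (K * H) * H := by rw [hkh]
  _ = K * (H * H) := by rw [mul_assoc]
  _ = -K := by rw [hH]; simp

lemma rel_KJ : K * J = -H := by
  have hhj := rel_HJ H J K hH hJ hK hHJK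
  calc K * J = (H * J) * J := by rw [hhj]
  _ = H * (J * J) := by rw [mul_assoc]
  _ = -H := by rw [hJ]; simp

lemma rel_HK : H * K = -J := by
  have hjk := rel_JK H J K hH hJ hK hHJK
  calc H * K = (J * K) * K := by rw [hjk]
  _ = J * (K * K) := by rw [mul_assoc]
  _ = -J := by rw [hK]; simp

lemma qRep_mul (p q : Quaternion ℝ) :
    qRep H J K (p * q) = qRep H J K p * qRep H J K q := by
  have hhj := rel_HJ H J K hH hJ hK hHJK
  have hjk := rel_JK H J K hH hJ hK hHJK
  have hkh := rel_KH H J K hH hJ hK hHJK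
  have hjh := rel_JH H J K hH hJ hK hHJK
  have hkj := rel_KJ H J K hH hJ hK hHJK
  have hhk := rel_HK H J K hH hJ hK hHJK
  simp only [qRep, Quaternion.re_mul, Quaternion.imI_mul, Quaternion.imJ_mul,
    Quaternion.imK_mul, Matrix.add_mul, Matrix.mul_add, Matrix.smul_mul,
    Matrix.mul_smul, Matrix.one_mul, Matrix.mul_one, hhj, hjk, hkh, hjh, hkj, hhk,
    hH, hJ, hK, smul_neg]
  module
end helper

section linmap
variable (H J K : Matrix (Fin 4) (Fin 4) ℝ)

/-- `q ↦ Q(q) e₀` as a real-linear map. -/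
noncomputable def qRepVec : Quaternion ℝ →ₗ[ℝ] (Fin 4 → ℝ) where
  toFun q := (qRep H J K q).mulVec (Pi.single 0 1)
  map_add' p q := by
    show (qRep H J K (p+q)).mulVec _ = (qRep H J K p).mulVec _ + (qRep H J K q).mulVec _
    have : qRep H J K (p + q) = qRep H J K p + qRep H J K q := by
      simp only [qRep, Quaternion.re_add, Quaternion.imI_add, Quaternion.imJ_add,
        Quaternion.imK_add]
      module
    rw [this, Matrix.add_mulVec]
  map_smul' r q := by
    show (qRep H J K (r • q)).mulVec _ = r • (qRep H J K q).mulVec _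
    have : qRep H J K (r • q) = r • qRep H J K q := by
      simp only [qRep, Quaternion.re_smul, Quaternion.imI_smul, Quaternion.imJ_smul,
        Quaternion.imK_smul, smul_eq_mul, mul_smul]
      module
    rw [this, Matrix.smul_mulVec]

lemma qRep_one : qRep H J K 1 = 1 := by
  simp [qRep, Quaternion.re_one, Quaternion.imI_one, Quaternion.imJ_one, Quaternion.imK_one]

variable (hH : H * H = -1) (hJ : J * J = -1) (hK : K * K = -1) (hHJK : H * J * K = -1)
include hH hJ hK hHJK

lemma qRepVec_injective : Function.Injective (qRepVec H J K) := by
  rw [← LinearMap.ker_eq_bot, LinearMap.ker_eq_bot']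
  intro q hq
  by_contra hq0
  have h1 : qRep H J K (q⁻¹ * q) = qRep H J K q⁻¹ * qRep H J K q :=
    qRep_mul H J K hH hJ hK hHJK _ _
  rw [inv_mul_cancel₀ hq0, qRep_one] at h1
  have : (Pi.single 0 1 : Fin 4 → ℝ) = 0 := by
    calc (Pi.single 0 1 : Fin 4 → ℝ) = (1 : Matrix (Fin 4) (Fin 4) ℝ).mulVec (Pi.single 0 1) := by
          rw [Matrix.one_mulVec]
    _ = (qRep H J K q⁻¹).mulVec ((qRep H J K q).mulVec (Pi.single 0 1)) := by
          rw [h1, Matrix.mulVec_mulVec]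
    _ = 0 := by
          have : (qRep H J K q).mulVec (Pi.single 0 1) = 0 := hq
          rw [this, Matrix.mulVec_zero]
  exact one_ne_zero (congrFun this 0)

lemma qRepVec_surjective : Function.Surjective (qRepVec H J K) := by
  have hfr : Module.finrank ℝ (Quaternion ℝ) = Module.finrank ℝ (Fin 4 → ℝ) := by
    rw [Quaternion.finrank_eq_four, Module.finrank_fin_fun]
  exact (LinearMap.injective_iff_surjective_of_finrank_eq_finrank hfr).mp
    (qRepVec_injective H J K hH hJ hK hHJK)
end linmap

lemma qRepVec_apply (H J K : Matrix (Fin 4) (Fin 4) ℝ) (q : Quaternion ℝ) :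
    qRepVec H J K q = (qRep H J K q).mulVec (Pi.single 0 1) := rfl

lemma qRepVec_mul (H J K : Matrix (Fin 4) (Fin 4) ℝ)
    (hH : H * H = -1) (hJ : J * J = -1) (hK : K * K = -1) (hHJK : H * J * K = -1)
    (p q : Quaternion ℝ) :
    qRepVec H J K (p * q) = (qRep H J K p).mulVec (qRepVec H J K q) := by
  rw [qRepVec_apply, qRep_mul H J K hH hJ hK hHJK, ← Matrix.mulVec_mulVec, qRepVec_apply]

/-- Theorem 3.1, left part: if `P(A) = P̃(B)` and `Q(λ) = Q̃(γ)`
for two Hamiltonian triples, then left eigenvalues correspond. -/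
theorem left_eigenvalue_of_pRep_eq
    (H J K H' J' K' : Matrix (Fin 4) (Fin 4) ℝ)
    (hH : H * H = -1) (hJ : J * J = -1) (hK : K * K = -1)
    (hHJK : H * J * K = -1)
    (hH' : H' * H' = -1) (hJ' : J' * J' = -1) (hK' : K' * K' = -1)
    (hHJK' : H' * J' * K' = -1) {m : ℕ}
    (A B : Matrix (Fin m) (Fin m) (Quaternion ℝ))
    (hAB : pRep H J K A = pRep H' J' K' B)
    (l g : Quaternion ℝ) (hlg : qRep H J K l = qRep H' J' K' g)
    (h : IsLeftEigenvalue A l) : IsLeftEigenvalue B g := by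
  obtain ⟨v, hv0, hAv⟩ := h
  have hABst : ∀ s t, qRep H J K (A s t) = qRep H' J' K' (B s t) := by
    intro s t
    ext i j
    have := congrFun (congrFun hAB (s, i)) (t, j)
    simpa [pRep] using this
  have hφinj := qRepVec_injective H' J' K' hH' hJ' hK' hHJK'
  have hφsurj := qRepVec_surjective H' J' K' hH' hJ' hK' hHJK'
  choose u hu using fun s => hφsurj (qRepVec H J K (v s))
  refine ⟨u, ?_, ?_⟩
  · -- u ≠ 0
    obtain ⟨s, hs⟩ := Function.ne_iff.mp hv0
    intro hu0
    apply hs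
    apply qRepVec_injective H J K hH hJ hK hHJK
    have : u s = 0 := congrFun hu0 s
    rw [← hu s, this, map_zero]
    simp
  · funext s
    apply hφinj
    calc qRepVec H' J' K' (B.mulVec u s)
        = qRepVec H' J' K' (∑ t, B s t * u t) := by
          simp [Matrix.mulVec, dotProduct]
      _ = ∑ t, qRepVec H' J' K' (B s t * u t) := map_sum _ _ _
      _ = ∑ t, (qRep H' J' K' (B s t)).mulVec (qRepVec H' J' K' (u t)) := by
          simp_rw [qRepVec_mul H' J' K' hH' hJ' hK' hHJK']
      _ = ∑ t, (qRep H J K (A s t)).mulVec (qRepVec H J K (v t)) := by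
          simp_rw [hABst, hu]
      _ = ∑ t, qRepVec H J K (A s t * v t) := by
          simp_rw [qRepVec_mul H J K hH hJ hK hHJK]
      _ = qRepVec H J K (∑ t, A s t * v t) := (map_sum _ _ _).symm
      _ = qRepVec H J K (A.mulVec v s) := by
          simp [Matrix.mulVec, dotProduct]
      _ = qRepVec H J K (l * v s) := by
          rw [hAv]; simp [smul_eq_mul]
      _ = (qRep H J K l).mulVec (qRepVec H J K (v s)) :=
          qRepVec_mul H J K hH hJ hK hHJK _ _
      _ = (qRep H' J' K' g).mulVec (qRepVec H' J' K' (u s)) := by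
          rw [hlg, hu]
      _ = qRepVec H' J' K' (g * u s) :=
          (qRepVec_mul H' J' K' hH' hJ' hK' hHJK' _ _).symm
      _ = qRepVec H' J' K' ((g • u) s) := by simp [smul_eq_mul]
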